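/- Let k ≥ 273 be an integer such that p = 2 + k^2 is prime, and let R = Z[1/p] = { x/p^m : x ∈ Z, m ≥ 0 } be the subring of Q generated by 1/p. The system x1 = 1, x1 + x1 = x2, x3·x3 = x4, x2 + x4 = x5, x5·x6 = x1 has a solution in R^6 (namely (1, 2, k, k^2, 2+k^2, 1/(2+k^2))), but every solution (x1,...,x6) ∈ R^6 satisfies |x5| > 2^(2^4) = 65536. -/

import Mathlib

theorem stmt_2 (k : ℤ) (hk : 273 ≤ k) (hp : Prime (2 + k ^ 2)) :
    (∃ x : Fin 6 → ℚ, (∀ i, ∃ (z : ℤ) (m : ℕ), x i = (z : ℚ) / ((2 + (k : ℚ) ^ 2) ^ m)) ∧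
      x 0 = 1 ∧ x 0 + x 0 = x 1 ∧ x 2 * x 2 = x 3 ∧ x 1 + x 3 = x 4 ∧ x 4 * x 5 = x 0) ∧
    (∀ x : Fin 6 → ℚ, (∀ i, ∃ (z : ℤ) (m : ℕ), x i = (z : ℚ) / ((2 + (k : ℚ) ^ 2) ^ m)) →
      x 0 = 1 → x 0 + x 0 = x 1 → x 2 * x 2 = x 3 → x 1 + x 3 = x 4 → x 4 * x 5 = x 0 →
      |x 4| > 2 ^ 2 ^ 4) := by
  have hq2 : (2 : ℚ) ≤ 2 + (k : ℚ) ^ 2 := by nlinarith [sq_nonneg (k : ℚ)]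
  have hq0 : (0 : ℚ) < 2 + (k : ℚ) ^ 2 := by linarith
  have hqbig : (65537 : ℚ) ≤ 2 + (k : ℚ) ^ 2 := by
    have : (273 : ℚ) ≤ (k : ℚ) := by exact_mod_cast hk
    nlinarith
  constructor
  · refine ⟨![1, 2, (k : ℚ), (k : ℚ)^2, 2 + (k : ℚ)^2, 1 / (2 + (k : ℚ)^2)], ?_, ?_, ?_, ?_, ?_, ?_⟩
    · intro i
      fin_cases i
      · exact ⟨1, 0, by norm_num⟩
      · exact ⟨2, 0, by norm_num⟩
      · exact ⟨k, 0, by norm_num⟩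
      · exact ⟨k ^ 2, 0, by push_cast; norm_num⟩
      · exact ⟨2 + k ^ 2, 0, by push_cast; norm_num⟩
      · exact ⟨1, 1, by show (1:ℚ)/(2 + (k:ℚ)^2) = _; push_cast; norm_num⟩
    · rfl
    · norm_num
    · show (k:ℚ) * k = (k:ℚ)^2
      norm_num [sq]
    · show (2:ℚ) + (k:ℚ)^2 = 2 + (k:ℚ)^2
      norm_num
    · show (2 + (k:ℚ)^2) * (1 / (2 + (k:ℚ)^2)) = 1
      field_simp
  · intro x hR h0 h1 h3 h4 h5
    set q : ℚ := 2 + (k : ℚ) ^ 2 with hqdef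
    obtain ⟨z, m, hz⟩ := hR 4
    obtain ⟨w, n, hw⟩ := hR 5
    have hx4ge : (2 : ℚ) ≤ x 4 := by nlinarith [sq_nonneg (x 2), sq_abs (x 2)]
    have hqm : (0 : ℚ) < q ^ m := pow_pos hq0 m
    have hqn : (0 : ℚ) < q ^ n := pow_pos hq0 n
    -- z * w = q ^ (m+n)
    have hprod : (z : ℚ) * w = q ^ (m + n) := by
      have := h5
      rw [hz, hw, h0] at this
      field_simp at this
      rw [pow_add]
      linarith [this]
    have hintprod : z * w = (2 + k ^ 2) ^ (m + n) := by
      have : ((z * w : ℤ) : ℚ) = (((2 + k ^ 2 : ℤ) ^ (m + n) : ℤ) : ℚ) := by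
        push_cast
        rw [hprod]
      exact_mod_cast this
    have hdvd : z ∣ (2 + k ^ 2) ^ (m + n) := ⟨w, hintprod.symm⟩
    have hpnat : Nat.Prime (2 + k ^ 2).natAbs := Int.prime_iff_natAbs_prime.mp hp
    have hdvdnat : z.natAbs ∣ (2 + k ^ 2).natAbs ^ (m + n) := by
      rw [← Int.natAbs_pow]
      exact Int.natAbs_dvd_natAbs.mpr hdvd
    obtain ⟨a, ha, hza⟩ := (Nat.dvd_prime_pow hpnat).mp hdvdnat
    -- |z| = p ^ a as rationals
    have hk0 : (0 : ℤ) ≤ 2 + k ^ 2 := by positivity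
    have hzabs : |z| = (2 + k ^ 2) ^ a := by
      rw [Int.abs_eq_natAbs, hza]
      push_cast [Int.natAbs_of_nonneg hk0]
      ring
    have habs : |(z : ℚ)| = q ^ a := by
      rw [← Int.cast_abs, hzabs, hqdef]
      push_cast
      ring
    have hx4abs : |x 4| = q ^ a / q ^ m := by
      rw [hz, abs_div, habs, abs_of_pos hqm]
    have h2le : (2 : ℚ) ≤ q ^ a / q ^ m := by
      rw [← hx4abs]
      calc (2:ℚ) ≤ x 4 := hx4ge
        _ ≤ |x 4| := le_abs_self _
    have hma : m < a := by
      by_contra h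
      push_neg at h
      have : q ^ a ≤ q ^ m := pow_le_pow_right₀ (by linarith) h
      have : q ^ a / q ^ m ≤ 1 := by
        rw [div_le_one hqm]; exact this
      linarith
    have : q * q ^ m ≤ q ^ a := by
      rw [← pow_succ']
      exact pow_le_pow_right₀ (by linarith) hma
    have hge : q ≤ q ^ a / q ^ m := by
      rw [le_div_iff₀ hqm]
      linarith
    rw [hx4abs]
    calc (2:ℚ) ^ 2 ^ 4 = 65536 := by norm_num
      _ < 65537 := by norm_num
      _ ≤ q := hqbig
      _ ≤ q ^ a / q ^ m := hge
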